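/- arXiv:math/0210009 — 4 statements merged into one kernel-verified Lean document; each statement's English description precedes it below -/
import Mathlib

section
/- Let R be a commutative ring, I ⊆ R an ideal, and suppose elements ℓ₀, x₁, …, x_n ∈ R and polynomials p ∈ R[t], w₁, …, w_n ∈ R[t] satisfy p(ℓ₀) ∈ I and p'(ℓ₀)·x_i − w_i(ℓ₀) ∈ I for all i. Then for any polynomial f ∈ R[X₁, …, X_n] of total degree at most d, with homogenization f^h ∈ R[X₀, X₁, …, X_n] up to degree d, one has p'(ℓ₀)^d · f(x₁, …, x_n) − f^h(p'(ℓ₀), w₁(ℓ₀), …, w_n(ℓ₀)) ∈ I. -/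
open MvPolynomial

/-- The homogenization of `f` up to degree `d`, with the new homogenizing variable
placed at index `0` of `Fin (n+1)`. -/
noncomputable def homogenize {R : Type*} [CommRing R] (n d : ℕ)
    (f : MvPolynomial (Fin n) R) : MvPolynomial (Fin (n + 1)) R :=
  f.support.sum fun m =>
    MvPolynomial.monomial
      (Finsupp.equivFunOnFinite.symm
        (Fin.cons (d - m.sum fun _ e => e) fun i => m i))
      (MvPolynomial.coeff m f)

/-- evaluating a polynomial on a geometric resolution modulo an ideal:
`p'(ℓ₀)^d · f(x) ≡ f^h(p'(ℓ₀), w₁(ℓ₀), …, w_n(ℓ₀)) (mod I)`. -/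
theorem stmt5 {R : Type*} [CommRing R] (n d : ℕ) (I : Ideal R)
    (ℓ₀ : R) (x : Fin n → R) (p : Polynomial R) (w : Fin n → Polynomial R)
    (hp : Polynomial.eval ℓ₀ p ∈ I)
    (hw : ∀ i, Polynomial.eval ℓ₀ (Polynomial.derivative p) * x i
      - Polynomial.eval ℓ₀ (w i) ∈ I)
    (f : MvPolynomial (Fin n) R) (hf : f.totalDegree ≤ d) :
    (Polynomial.eval ℓ₀ (Polynomial.derivative p)) ^ d * MvPolynomial.eval x f -
      MvPolynomial.eval
        (Fin.cons (Polynomial.eval ℓ₀ (Polynomial.derivative p))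
          fun i => Polynomial.eval ℓ₀ (w i))
        (homogenize n d f) ∈ I := by
  classical
  rw [← Ideal.Quotient.eq]
  set a := Polynomial.eval ℓ₀ (Polynomial.derivative p) with ha
  set q := Ideal.Quotient.mk I with hq
  have hxy : ∀ i, q a * q (x i) = q (Polynomial.eval ℓ₀ (w i)) := fun i => by
    rw [← map_mul]; exact Ideal.Quotient.eq.mpr (hw i)
  rw [homogenize, MvPolynomial.eval_eq']
  simp only [map_sum, map_mul, map_pow, Finset.mul_sum, map_prod,
    MvPolynomial.eval_monomial]
  refine Finset.sum_congr rfl fun m hm => ?_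
  have hmd : (m.sum fun _ e => e) ≤ d := le_trans (MvPolynomial.le_totalDegree hm) hf
  rw [Finsupp.prod_pow]
  simp only [map_sum, map_mul, map_pow, map_prod,
    Finsupp.coe_equivFunOnFinite_symm, Fin.prod_univ_succ,
    Fin.cons_zero, Fin.cons_succ]
  have hsum : (m.sum fun _ e => e) = ∑ i, m i :=
    Finsupp.sum_fintype _ _ (fun i => rfl)
  have key : ∏ i, q (Polynomial.eval ℓ₀ (w i)) ^ m i
      = (q a) ^ (m.sum fun _ e => e) * ∏ i, q (x i) ^ m i := by
    rw [hsum, ← Finset.prod_pow_eq_pow_sum, ← Finset.prod_mul_distrib]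
    exact Finset.prod_congr rfl fun i _ => by rw [← hxy, mul_pow]
  rw [key, ← mul_assoc, ← mul_assoc]
  rw [show (q a) ^ d = (q a) ^ (d - m.sum fun _ e => e) * (q a) ^ (m.sum fun _ e => e) by
    rw [← pow_add, Nat.sub_add_cancel hmd]]
  ring
end

section
/- (Zippel–Schwartz) Let R be an integral domain, f ∈ R[x₁, …, x_n] a nonzero polynomial of total degree at most d, and S ⊆ R a finite set. Then the number of points a ∈ S^n with f(a) = 0 is at most d · |S|^{n−1}. -/
open MvPolynomial
open scoped Classical

/-- Univariate root counting inside a finset. -/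
private lemma uni_count {R : Type*} [CommRing R] [IsDomain R] (p : Polynomial R)
    (hp : p ≠ 0) (S : Finset R) :
    (S.filter fun y => p.eval y = 0).card ≤ p.natDegree := by
  calc (S.filter fun y => p.eval y = 0).card
      ≤ p.roots.toFinset.card := by
        apply Finset.card_le_card
        intro y hy
        simp only [Finset.mem_filter] at hy
        simp [Multiset.mem_toFinset, Polynomial.mem_roots', hp, hy.2, Polynomial.IsRoot]
    _ ≤ Multiset.card p.roots := p.roots.toFinset_card_le
    _ ≤ p.natDegree := p.card_roots'

/-- With no variables, a nonzero polynomial has no zeros at all. -/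
private lemma zero_case {R : Type*} [CommRing R] [IsDomain R]
    (f : MvPolynomial (Fin 0) R) (hf : f ≠ 0) (S : Finset R) :
    ((Fintype.piFinset fun _ : Fin 0 => S).filter
        fun a => MvPolynomial.eval a f = 0) = ∅ := by
  apply Finset.filter_eq_empty_iff.2
  intro a _
  rw [MvPolynomial.eq_C_of_isEmpty f, MvPolynomial.eval_C]
  intro h
  apply hf
  rw [MvPolynomial.eq_C_of_isEmpty f, h, map_zero]

private lemma sz_aux {R : Type*} [CommRing R] [IsDomain R] :
    ∀ (n : ℕ) (f : MvPolynomial (Fin n) R), f ≠ 0 → ∀ (d : ℕ), f.totalDegree ≤ d →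
    ∀ (S : Finset R),
    ((Fintype.piFinset fun _ : Fin n => S).filter
        fun a => MvPolynomial.eval a f = 0).card * S.card ≤ d * S.card ^ n := by
  intro n
  induction n with
  | zero =>
    intro f hf d hd S
    rw [zero_case f hf S]
    simp
  | succ m ih =>
    intro f hf d hd S
    set g := MvPolynomial.finSuccEquiv R m f with hg
    have hg0 : g ≠ 0 := by
      intro h
      exact hf ((MvPolynomial.finSuccEquiv R m).injective (by simp [← hg, h]))
    set k := g.natDegree with hk
    set c := g.leadingCoeff with hc
    have hc0 : c ≠ 0 := Polynomial.leadingCoeff_ne_zero.2 hg0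
    have hcoeff : g.coeff k = c := rfl
    have hck : c.totalDegree + k ≤ f.totalDegree := by
      have := MvPolynomial.totalDegree_coeff_finSuccEquiv_add_le f k
        (by rw [← hg, hcoeff]; exact hc0)
      rwa [← hg, hcoeff] at this
    have hkd : k ≤ d := le_trans (le_trans (Nat.le_add_left _ _) hck) hd
    have hcd : c.totalDegree ≤ d - k := by omega
    set B := Fintype.piFinset fun _ : Fin m => S with hB
    set T := Fintype.piFinset fun _ : Fin (m+1) => S with hT
    -- fiberwise count
    have key : (T.filter fun a => MvPolynomial.eval a f = 0).card =
        ∑ a' ∈ B, (S.filter fun y => MvPolynomial.eval (Fin.cons y a') f = 0).card := by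
      rw [Finset.card_eq_sum_card_fiberwise (f := fun a => Fin.tail a)
        (t := B) (fun a ha => by
          rw [Finset.mem_coe] at ha
          simp only [Finset.mem_filter, hT, Fintype.mem_piFinset] at ha
          rw [Finset.mem_coe]
          simp only [hB, Fintype.mem_piFinset]
          exact fun i => ha.1 _)]
      apply Finset.sum_congr rfl
      intro a' ha'
      apply Finset.card_nbij' (i := fun a => a 0) (j := fun y => Fin.cons y a')
      · intro a ha
        rw [Finset.mem_coe] at ha
        simp only [Finset.mem_filter, hT, Fintype.mem_piFinset] at ha
        obtain ⟨⟨haS, haP⟩, hatail⟩ := ha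
        rw [Finset.mem_coe]
        simp only [Finset.mem_filter]
        refine ⟨haS 0, ?_⟩
        have hcons : Fin.cons (a 0) a' = a := by
          rw [← hatail]; exact Fin.cons_self_tail a
        rw [hcons]; exact haP
      · intro y hy
        rw [Finset.mem_coe] at hy
        simp only [Finset.mem_filter] at hy
        simp only [hB, Fintype.mem_piFinset] at ha'
        rw [Finset.mem_coe]
        simp only [Finset.mem_filter, hT, Fintype.mem_piFinset]
        refine ⟨⟨fun i => ?_, hy.2⟩, by simp⟩
        induction i using Fin.cases with
        | zero => simpa using hy.1
        | succ j => simpa using ha' j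
      · intro a ha
        rw [Finset.mem_coe] at ha
        simp only [Finset.mem_filter] at ha
        rw [← ha.2]; exact Fin.cons_self_tail a
      · intro y _
        simp
    -- per-fiber bound
    have fiber_bound : ∀ a' : Fin m → R, MvPolynomial.eval a' c ≠ 0 →
        (S.filter fun y => MvPolynomial.eval (Fin.cons y a') f = 0).card ≤ k := by
      intro a' hca'
      have heval : ∀ y, MvPolynomial.eval (Fin.cons y a') f =
          Polynomial.eval y (g.map (MvPolynomial.eval a')) :=
        fun y => MvPolynomial.eval_eq_eval_mv_eval' a' y f
      have hpne : g.map (MvPolynomial.eval a') ≠ 0 := by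
        intro h
        apply hca'
        have hcm : (g.map (MvPolynomial.eval a')).coeff k
            = MvPolynomial.eval a' (g.coeff k) := Polynomial.coeff_map _ _
        rw [h, Polynomial.coeff_zero, hcoeff] at hcm
        exact hcm.symm
      have hdeg : (g.map (MvPolynomial.eval a')).natDegree ≤ k :=
        Polynomial.natDegree_map_le
      have hfe : (S.filter fun y => MvPolynomial.eval (Fin.cons y a') f = 0)
          = (S.filter fun y => (g.map (MvPolynomial.eval a')).eval y = 0) := by
        apply Finset.filter_congr
        intro y _
        simp [heval y]
      calc (S.filter fun y => MvPolynomial.eval (Fin.cons y a') f = 0).card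
          = (S.filter fun y => (g.map (MvPolynomial.eval a')).eval y = 0).card := by rw [hfe]
        _ ≤ (g.map (MvPolynomial.eval a')).natDegree := uni_count _ hpne S
        _ ≤ k := hdeg
    set B0 := B.filter (fun a' => MvPolynomial.eval a' c = 0) with hB0
    have hIH : B0.card * S.card ≤ (d - k) * S.card ^ m := ih c hc0 (d - k) hcd S
    have split : (T.filter fun a => MvPolynomial.eval a f = 0).card
        ≤ B0.card * S.card + B.card * k := by
      rw [key]
      rw [← Finset.sum_filter_add_sum_filter_not B (fun a' => MvPolynomial.eval a' c = 0)]
      have h1 : ∑ a' ∈ B0, (S.filter fun y => MvPolynomial.eval (Fin.cons y a') f = 0).card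
          ≤ B0.card * S.card := by
        calc ∑ a' ∈ B0, (S.filter fun y => MvPolynomial.eval (Fin.cons y a') f = 0).card
            ≤ ∑ _a' ∈ B0, S.card :=
              Finset.sum_le_sum fun a' _ => Finset.card_filter_le _ _
          _ = B0.card * S.card := by rw [Finset.sum_const, smul_eq_mul]
      have h2 : ∑ a' ∈ B.filter (fun a' => ¬ MvPolynomial.eval a' c = 0),
            (S.filter fun y => MvPolynomial.eval (Fin.cons y a') f = 0).card
          ≤ B.card * k := by
        calc ∑ a' ∈ B.filter (fun a' => ¬ MvPolynomial.eval a' c = 0),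
              (S.filter fun y => MvPolynomial.eval (Fin.cons y a') f = 0).card
            ≤ ∑ a' ∈ B.filter (fun a' => ¬ MvPolynomial.eval a' c = 0), k := by
              apply Finset.sum_le_sum
              intro a' ha'
              simp only [Finset.mem_filter] at ha'
              exact fiber_bound a' ha'.2
          _ = (B.filter (fun a' => ¬ MvPolynomial.eval a' c = 0)).card * k := by
              rw [Finset.sum_const, smul_eq_mul]
          _ ≤ B.card * k := Nat.mul_le_mul_right k (Finset.card_filter_le _ _)
      exact Nat.add_le_add h1 h2
    have hBcard : B.card = S.card ^ m := by simp [hB]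
    calc (T.filter fun a => MvPolynomial.eval a f = 0).card * S.card
        ≤ (B0.card * S.card + B.card * k) * S.card := Nat.mul_le_mul_right _ split
      _ = B0.card * S.card * S.card + B.card * k * S.card := by ring
      _ ≤ (d - k) * S.card ^ m * S.card + S.card ^ m * k * S.card := by
          gcongr
          rw [hBcard]
      _ = ((d - k) + k) * S.card ^ (m + 1) := by ring
      _ = d * S.card ^ (m + 1) := by rw [Nat.sub_add_cancel hkd]

/-- Zippel–Schwartz: a nonzero polynomial of total degree at most `d`
over an integral domain has at most `d·|S|^{n−1}` zeros in `S^n`. -/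
theorem stmt8 {R : Type*} [CommRing R] [IsDomain R] (n d : ℕ)
    (f : MvPolynomial (Fin n) R) (hf : f ≠ 0) (hd : f.totalDegree ≤ d)
    (S : Finset R) :
    ((Fintype.piFinset fun _ : Fin n => S).filter
        fun a => MvPolynomial.eval a f = 0).card ≤ d * S.card ^ (n - 1) := by
  cases n with
  | zero =>
    rw [zero_case f hf S]
    simp
  | succ m =>
    have h := sz_aux (m + 1) f hf d hd S
    rcases Nat.eq_zero_or_pos S.card with hS | hS
    · calc _ ≤ (Fintype.piFinset fun _ : Fin (m+1) => S).card := Finset.card_filter_le _ _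
        _ = S.card ^ (m+1) := by simp
        _ = 0 := by rw [hS]; simp
        _ ≤ _ := Nat.zero_le _
    · have h' : ((Fintype.piFinset fun _ : Fin (m+1) => S).filter
          fun a => MvPolynomial.eval a f = 0).card * S.card ≤ d * S.card ^ m * S.card := by
        calc _ ≤ d * S.card ^ (m+1) := h
          _ = d * S.card ^ m * S.card := by ring
      simpa using Nat.le_of_mul_le_mul_right h' hS
end

section
/- Let K ⊆ L be a finite separable field extension of degree D, ℓ₀ a primitive element with minimal polynomial p ∈ K[t], and w₁, …, w_n ∈ K[t] with p'(ℓ₀)·x_i = w_i(ℓ₀) for given x₁, …, x_n ∈ L. Let ℓ := c₀ + c₁x₁ + ⋯ + c_nx_n ∈ L for scalars c_i ∈ K. Then p'(ℓ₀)·ℓ = v(ℓ₀) where v := c₀·p' + c₁·w₁ + ⋯ + c_n·w_n ∈ K[t], and det( p'(M_p)·t − v(M_p) ) = det(p'(M_p)) · χ_ℓ(t), where M_p is the companion matrix of p and χ_ℓ is the characteristic polynomial of multiplication by ℓ on L. -/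
open Polynomial

/-- The companion matrix of a polynomial `p`, of size `p.natDegree`. -/
noncomputable def companionMatrix {K : Type*} [CommRing K] (p : K[X]) :
    Matrix (Fin p.natDegree) (Fin p.natDegree) K :=
  Matrix.of fun i j =>
    if (j : ℕ) + 1 = p.natDegree then -p.coeff i
    else if (i : ℕ) = (j : ℕ) + 1 then 1 else 0

section Aux
variable {K L : Type*} [Field K] [Field L] [Algebra K L]

lemma pow_natDegree_eq (ℓ₀ : L) (hint : IsIntegral K ℓ₀) :
    ℓ₀ ^ (minpoly K ℓ₀).natDegree =
      ∑ i ∈ Finset.range (minpoly K ℓ₀).natDegree, (-(minpoly K ℓ₀).coeff i) • ℓ₀ ^ i := by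
  have h0 : aeval ℓ₀ (minpoly K ℓ₀) = 0 := minpoly.aeval K ℓ₀
  rw [aeval_eq_sum_range, Finset.sum_range_succ, (minpoly.monic hint).coeff_natDegree,
    one_smul] at h0
  have h1 := eq_neg_of_add_eq_zero_right h0
  rw [h1, ← Finset.sum_neg_distrib]
  exact Finset.sum_congr rfl fun i _ => (neg_smul _ _).symm

lemma toMatrix_lmul_gen (ℓ₀ : L) (hint : IsIntegral K ℓ₀)
    (b : Module.Basis (Fin (minpoly K ℓ₀).natDegree) K L)
    (hb : ∀ i, b i = ℓ₀ ^ (i : ℕ)) :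
    LinearMap.toMatrix b b (Algebra.lmul K L ℓ₀) = companionMatrix (minpoly K ℓ₀) := by
  ext i j
  rw [LinearMap.toMatrix_apply, hb j]
  have : Algebra.lmul K L ℓ₀ (ℓ₀ ^ (j : ℕ)) = ℓ₀ ^ ((j : ℕ) + 1) := by
    simp [pow_succ, mul_comm]
  rw [this, companionMatrix]
  by_cases hj : (j : ℕ) + 1 = (minpoly K ℓ₀).natDegree
  · rw [hj, pow_natDegree_eq ℓ₀ hint]
    rw [← Fin.sum_univ_eq_sum_range (fun k => (-(minpoly K ℓ₀).coeff k) • ℓ₀ ^ k)]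
    simp only [← hb]
    simp [Finsupp.single_apply, hj]
  · have hlt : (j : ℕ) + 1 < (minpoly K ℓ₀).natDegree :=
      lt_of_le_of_ne (Nat.succ_le_of_lt j.isLt) hj
    have heq : ℓ₀ ^ ((j : ℕ) + 1) = b ⟨(j : ℕ) + 1, hlt⟩ := (hb ⟨(j : ℕ) + 1, hlt⟩).symm
    rw [heq]
    simp only [Module.Basis.repr_self, Matrix.of_apply, hj, if_false, Finsupp.single_apply]
    by_cases hij : (i : ℕ) = (j : ℕ) + 1
    · simp [hij, Fin.ext_iff]
    · simp [hij, Fin.ext_iff, Ne.symm hij]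

end Aux

section Aux2
variable {K L : Type*} [Field K] [Field L] [Algebra K L]

lemma toMatrix_lmul_aeval (ℓ₀ : L) (hint : IsIntegral K ℓ₀)
    (b : Module.Basis (Fin (minpoly K ℓ₀).natDegree) K L)
    (hb : ∀ i, b i = ℓ₀ ^ (i : ℕ)) (q : K[X]) :
    LinearMap.toMatrix b b (Algebra.lmul K L (aeval ℓ₀ q)) =
      aeval (companionMatrix (minpoly K ℓ₀)) q := by
  let φ : L →ₐ[K] Matrix (Fin (minpoly K ℓ₀).natDegree) (Fin (minpoly K ℓ₀).natDegree) K :=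
    (LinearMap.toMatrixAlgEquiv b).toAlgHom.comp (Algebra.lmul K L)
  have hφ : ∀ y : L, φ y = LinearMap.toMatrix b b (Algebra.lmul K L y) := fun _ => rfl
  have key : φ (aeval ℓ₀ q) = aeval (φ ℓ₀) q := (aeval_algHom_apply φ ℓ₀ q).symm
  rw [← hφ, key, hφ, toMatrix_lmul_gen ℓ₀ hint b hb]

end Aux2

/-- with `p'(ℓ₀)·xᵢ = wᵢ(ℓ₀)` and `ℓ = c₀ + ∑ cᵢxᵢ`, setting
`v = c₀·p' + ∑ cᵢ·wᵢ` one has `p'(ℓ₀)·ℓ = v(ℓ₀)` and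
`det(p'(M_p)·t − v(M_p)) = det(p'(M_p))·χ_ℓ(t)`. -/
theorem stmt15 {K L : Type*} [Field K] [Field L] [Algebra K L]
    [FiniteDimensional K L] (n D : ℕ) (hD : Module.finrank K L = D)
    (ℓ₀ : L) (hprim : IntermediateField.adjoin K {ℓ₀} = ⊤)
    (hsep : (minpoly K ℓ₀).Separable)
    (x : Fin n → L) (w : Fin n → K[X])
    (hw : ∀ i, Polynomial.aeval ℓ₀ (Polynomial.derivative (minpoly K ℓ₀)) * x i =
      Polynomial.aeval ℓ₀ (w i))
    (c₀ : K) (c : Fin n → K) :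
    Polynomial.aeval ℓ₀ (Polynomial.derivative (minpoly K ℓ₀)) *
        (algebraMap K L c₀ + ∑ i, algebraMap K L (c i) * x i) =
      Polynomial.aeval ℓ₀
        (Polynomial.C c₀ * Polynomial.derivative (minpoly K ℓ₀) +
          ∑ i, Polynomial.C (c i) * w i) ∧
    ((Polynomial.X : K[X]) •
        (Polynomial.aeval (companionMatrix (minpoly K ℓ₀))
          (Polynomial.derivative (minpoly K ℓ₀))).map Polynomial.C -
      (Polynomial.aeval (companionMatrix (minpoly K ℓ₀))
          (Polynomial.C c₀ * Polynomial.derivative (minpoly K ℓ₀) +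
            ∑ i, Polynomial.C (c i) * w i)).map Polynomial.C).det =
    Polynomial.C
        (Polynomial.aeval (companionMatrix (minpoly K ℓ₀))
          (Polynomial.derivative (minpoly K ℓ₀))).det *
      (LinearMap.mulLeft K (algebraMap K L c₀ + ∑ i, algebraMap K L (c i) * x i)).charpoly := by
  have hint : IsIntegral K ℓ₀ := IsIntegral.of_finite K ℓ₀
  set ℓ : L := algebraMap K L c₀ + ∑ i, algebraMap K L (c i) * x i with hℓ
  set v : K[X] := C c₀ * derivative (minpoly K ℓ₀) + ∑ i, C (c i) * w i with hvdef
  have hv : (aeval ℓ₀) v = aeval ℓ₀ (derivative (minpoly K ℓ₀)) * ℓ := by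
    simp only [hvdef, hℓ, map_add, map_sum, map_mul, aeval_C]
    rw [mul_add, Finset.mul_sum]
    congr 1
    · ring
    · refine Finset.sum_congr rfl fun i _ => ?_
      rw [← hw i]; ring
  refine ⟨hv.symm, ?_⟩
  -- power basis
  let e : (IntermediateField.adjoin K {ℓ₀} : IntermediateField K L) ≃ₐ[K] L := (IntermediateField.equivOfEq hprim).trans IntermediateField.topEquiv
  let pb := (IntermediateField.adjoin.powerBasis hint).map e
  have hgen : pb.gen = ℓ₀ := by
    simp [pb, e, IntermediateField.AdjoinSimple.coe_gen]
  let b : Module.Basis (Fin (minpoly K ℓ₀).natDegree) K L := pb.basis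
  have hb : ∀ i : Fin (minpoly K ℓ₀).natDegree, b i = ℓ₀ ^ (i : ℕ) := fun i => by
    have := pb.basis_eq_pow i
    rwa [hgen] at this
  have hA := toMatrix_lmul_aeval ℓ₀ hint b hb (derivative (minpoly K ℓ₀))
  have hBv := toMatrix_lmul_aeval ℓ₀ hint b hb v
  set M := companionMatrix (minpoly K ℓ₀)
  set Cm := LinearMap.toMatrix b b (Algebra.lmul K L ℓ) with hCm
  have hB : aeval M v = aeval M (derivative (minpoly K ℓ₀)) * Cm := by
    rw [← hBv, ← hA, hCm, hv, map_mul, LinearMap.toMatrix_mul]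
  set A := aeval M (derivative (minpoly K ℓ₀)) with hAdef
  have hml : LinearMap.mulLeft K ℓ = Algebra.lmul K L ℓ := by
    ext y; simp [Algebra.coe_lmul_eq_mul]
  have hcp : Cm.charpoly = (LinearMap.mulLeft K ℓ).charpoly := by
    rw [hml, hCm]; exact LinearMap.charpoly_toMatrix _ b
  rw [hB, ← hcp]
  have hchm : (X : K[X]) • (1 : Matrix (Fin (minpoly K ℓ₀).natDegree)
      (Fin (minpoly K ℓ₀).natDegree) K[X]) - Cm.map C = Matrix.charmatrix Cm := by
    ext i j
    by_cases h : i = j <;>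
      simp [Matrix.charmatrix_apply, Matrix.one_apply, Matrix.diagonal_apply, h, Matrix.map_apply]
  calc ((X : K[X]) • A.map C - (A * Cm).map C).det
      = (A.map C * ((X : K[X]) • 1 - Cm.map C)).det := by
        rw [mul_sub, mul_smul_comm, mul_one, ← Matrix.map_mul]
    _ = (A.map C).det * ((X : K[X]) • 1 - Cm.map C).det := Matrix.det_mul _ _
    _ = C A.det * Cm.charpoly := by
        rw [hchm]
        have hdet : (A.map (⇑(Polynomial.C : K →+* K[X]))).det = Polynomial.C A.det :=
          ((Polynomial.C : K →+* K[X]).map_det A).symm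
        rw [hdet]
        rfl
end

section
/- Let K ⊆ L be a finite separable field extension of degree D with L = K(ℓ₀), let p ∈ K[t] be the minimal polynomial of ℓ₀, and let f ∈ L. Suppose f = F(x₁, …, x_n) for a polynomial F ∈ K[X₁, …, X_n] of degree at most d and elements x_i ∈ L with p'(ℓ₀)x_i = w_i(ℓ₀), w_i ∈ K[t]. Then det(p'(M_p))^d · N_{L/K}(f) = det( F^h(p'(M_p), w₁(M_p), …, w_n(M_p)) ), where M_p is the companion matrix of p, F^h is the homogenization of F to degree d, and N_{L/K} is the field norm. -/
open Polynomial MvPolynomial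

/-- with `f = F(x₁,…,xₙ)`, `deg F ≤ d` and `p'(ℓ₀)xᵢ = wᵢ(ℓ₀)`,
`det(p'(M_p))^d · N_{L/K}(f) = det(F^h(p'(M_p), w₁(M_p), …, wₙ(M_p)))`, where the
homogenization `F^h` is evaluated on the commuting matrices `p'(M_p), wᵢ(M_p)`. -/
theorem stmt19 {K L : Type*} [Field K] [Field L] [Algebra K L]
    [FiniteDimensional K L] (n d D : ℕ) (hD : Module.finrank K L = D)
    (ℓ₀ : L) (hprim : IntermediateField.adjoin K {ℓ₀} = ⊤)
    (hsep : (minpoly K ℓ₀).Separable)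
    (x : Fin n → L) (w : Fin n → K[X])
    (hw : ∀ i, Polynomial.aeval ℓ₀ (Polynomial.derivative (minpoly K ℓ₀)) * x i =
      Polynomial.aeval ℓ₀ (w i))
    (F : MvPolynomial (Fin n) K) (hFdeg : F.totalDegree ≤ d)
    (f : L) (hf : f = MvPolynomial.aeval x F) :
    (Polynomial.aeval (companionMatrix (minpoly K ℓ₀))
          (Polynomial.derivative (minpoly K ℓ₀))).det ^ d *
        Algebra.norm K f =
      (∑ m ∈ F.support,
          MvPolynomial.coeff m F •
            ((Polynomial.aeval (companionMatrix (minpoly K ℓ₀))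
                (Polynomial.derivative (minpoly K ℓ₀))) ^ (d - m.sum fun _ e => e) *
              (List.ofFn fun i : Fin n =>
                (Polynomial.aeval (companionMatrix (minpoly K ℓ₀)) (w i)) ^ m i).prod)).det := by
  have hint : IsIntegral K ℓ₀ := IsIntegral.of_finite K ℓ₀
  set p := minpoly K ℓ₀ with hp
  -- build a power basis of L with generator ℓ₀
  let eqv : IntermediateField.adjoin K {ℓ₀} ≃ₐ[K] L :=
    (IntermediateField.equivOfEq hprim).trans IntermediateField.topEquiv
  let pb : PowerBasis K L := (IntermediateField.adjoin.powerBasis hint).map eqv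
  have hgen : pb.gen = ℓ₀ := rfl
  have hdim : pb.dim = p.natDegree := by
    rw [hp, ← hgen, pb.natDegree_minpoly]
  -- the algebra hom to matrices
  let φ : L →ₐ[K] Matrix (Fin p.natDegree) (Fin p.natDegree) K :=
    ((Matrix.reindexAlgEquiv K K (finCongr hdim)).toAlgHom).comp
      (Algebra.leftMulMatrix pb.basis)
  have hdet : ∀ α : L, (φ α).det = Algebra.norm K α := by
    intro α
    show (Matrix.reindexAlgEquiv K K (finCongr hdim) (Algebra.leftMulMatrix pb.basis α)).det = _
    rw [Matrix.reindexAlgEquiv_apply, Matrix.det_reindex_self,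
      Algebra.norm_eq_matrix_det pb.basis]
  have hφgen : φ ℓ₀ = companionMatrix p := by
    ext i j
    rw [show φ ℓ₀ = Matrix.reindexAlgEquiv K K (finCongr hdim)
        (Algebra.leftMulMatrix pb.basis pb.gen) from rfl, pb.leftMulMatrix]
    simp only [companionMatrix, Matrix.reindexAlgEquiv_apply, Matrix.reindex_apply,
      Matrix.submatrix_apply, Matrix.of_apply, finCongr_symm, finCongr_apply, Fin.coe_cast,
      pb.minpolyGen_eq, hgen, hdim, ← hp]
  have haev : ∀ q : K[X], Polynomial.aeval (companionMatrix p) q = φ (Polynomial.aeval ℓ₀ q) := by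
    intro q
    rw [← hφgen, Polynomial.aeval_algHom_apply]
  -- the element of L corresponding to the RHS
  set p' : L := Polynomial.aeval ℓ₀ (Polynomial.derivative p) with hp'
  have key : p' ^ d * f = ∑ m ∈ F.support,
      MvPolynomial.coeff m F •
        (p' ^ (d - m.sum fun _ e => e) *
          (List.ofFn fun i : Fin n => (Polynomial.aeval ℓ₀ (w i)) ^ m i).prod) := by
    have hf2 : f = ∑ m ∈ F.support, MvPolynomial.coeff m F • ∏ i, x i ^ m i := by
      rw [hf]
      conv_lhs => rw [F.as_sum]
      rw [map_sum]
      refine Finset.sum_congr rfl fun m hm => ?_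
      rw [MvPolynomial.aeval_monomial, Algebra.smul_def]
      congr 1
      exact Finsupp.prod_fintype m (fun i e => x i ^ e) fun i => pow_zero _
    rw [hf2, Finset.mul_sum]
    refine Finset.sum_congr rfl fun m hm => ?_
    have hs : (m.sum fun _ e => e) = ∑ i, m i :=
      Finsupp.sum_fintype m (fun _ e => e) fun _ => rfl
    have hmsum : (∑ i, m i) ≤ d := by
      rw [← hs]; exact le_trans (MvPolynomial.le_totalDegree hm) hFdeg
    rw [mul_smul_comm]
    congr 1
    rw [List.prod_ofFn, hs]
    have hsplit : p' ^ d = p' ^ (d - ∑ i, m i) * ∏ i, p' ^ m i := by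
      rw [Finset.prod_pow_eq_pow_sum, ← pow_add, Nat.sub_add_cancel hmsum]
    rw [hsplit, mul_assoc]
    congr 1
    rw [← Finset.prod_mul_distrib]
    exact Finset.prod_congr rfl fun i _ => by rw [← mul_pow, hw i]
  -- now transfer via φ
  have hR : (∑ m ∈ F.support,
      MvPolynomial.coeff m F •
        ((Polynomial.aeval (companionMatrix p) (Polynomial.derivative p)) ^ (d - m.sum fun _ e => e) *
          (List.ofFn fun i : Fin n =>
            (Polynomial.aeval (companionMatrix p) (w i)) ^ m i).prod)) = φ (p' ^ d * f) := by
    rw [key, map_sum]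
    refine Finset.sum_congr rfl fun m hm => ?_
    simp only [map_smul, map_mul, map_pow, map_list_prod φ, List.map_ofFn,
      Function.comp_def, haev]
    rfl
  rw [hR, hdet, map_mul, map_pow, haev, hdet]
end
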